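/- Let G be a connected simple graph with minimum degree δ(G), and let r ≥ 6 with r ≢ 0 (mod 3) and diam(G) ≥ r. Then e(G^r) ≥ (1/2)·⌈r/3⌉·δ(G)·|G|. -/

import Mathlib

namespace SimpleGraph

variable {V : Type*}

private lemma dist_getVert_le' {G : SimpleGraph V} (hG : G.Connected) {u v : V}
    (p : G.Walk u v) (a : ℕ) : G.dist u (p.getVert a) ≤ a := by
  induction p generalizing a with
  | nil =>
    rw [Walk.getVert_of_length_le _ (by simp)]
    simp [SimpleGraph.dist_self]
  | @cons u w v h q ih =>
    cases a with
    | zero => simp [Walk.getVert_zero, G.dist_self]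
    | succ a =>
      rw [Walk.getVert_cons_succ]
      calc G.dist u (q.getVert a) ≤ G.dist u w + G.dist w (q.getVert a) := hG.dist_triangle
        _ ≤ 1 + a := by
            have h1 : G.dist u w ≤ 1 := by
              simpa using G.dist_le (Walk.cons h Walk.nil)
            exact Nat.add_le_add h1 (ih a)
        _ = a + 1 := Nat.add_comm 1 a

private lemma dist_getVert_right_le {G : SimpleGraph V} {u v : V}
    (p : G.Walk u v) (a : ℕ) : G.dist (p.getVert a) v ≤ p.length - a := by
  induction p generalizing a with
  | nil =>
    rw [Walk.getVert_of_length_le _ (by simp)]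
    simp
  | @cons u w v h q ih =>
    cases a with
    | zero =>
      rw [Walk.getVert_zero]
      simpa using G.dist_le (Walk.cons h q)
    | succ a =>
      rw [Walk.getVert_cons_succ]
      simpa using ih a

open Finset in
/-- Chain lemma: if `3*(m-1) ≤ dist v z` and `3*(m-1)+1 ≤ r`, then the ball of
radius `r` around `v` contains at least `m * (δ+1)` vertices. -/
private lemma chain_card {G : SimpleGraph V} [Fintype V] [DecidableRel G.Adj] [DecidableEq V]
    (hG : G.Connected) {v z : V} {m r : ℕ} (hm : 1 ≤ m)
    (hdz : 3 * (m - 1) ≤ G.dist v z) (hmr : 3 * (m - 1) + 1 ≤ r) :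
    m * (G.minDegree + 1) ≤ #(univ.filter (fun y => G.dist v y ≤ r)) := by
  obtain ⟨p, hp⟩ := (hG v z).exists_walk_length_eq_dist
  set x : ℕ → V := fun i => p.getVert (3 * i) with hx
  have hxle : ∀ i, G.dist v (x i) ≤ 3 * i := fun i => dist_getVert_le' hG p (3 * i)
  have hxge : ∀ i, i ≤ m - 1 → 3 * i ≤ G.dist v (x i) := by
    intro i hi
    have h1 : G.dist (x i) z ≤ G.dist v z - 3 * i := by
      have := dist_getVert_right_le p (3 * i)
      rwa [hp] at this
    have h2 : G.dist v z ≤ G.dist v (x i) + G.dist (x i) z := hG.dist_triangle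
    have h3 : 3 * i ≤ G.dist v z := le_trans (by omega) hdz
    omega
  have hsep : ∀ i j, i < j → j ≤ m - 1 → 3 ≤ G.dist (x i) (x j) := by
    intro i j hij hj
    have h1 : G.dist v (x j) ≤ G.dist v (x i) + G.dist (x i) (x j) := hG.dist_triangle
    have h2 := hxge j hj
    have h3 := hxle i
    omega
  set N : ℕ → Finset V := fun i => insert (x i) (G.neighborFinset (x i)) with hN
  have hNcard : ∀ i, G.minDegree + 1 ≤ #(N i) := by
    intro i
    rw [hN]
    rw [Finset.card_insert_of_notMem (by simp)]
    exact Nat.add_le_add (G.minDegree_le_degree (x i)) le_rfl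
  have hdist1 : ∀ i y, y ∈ N i → G.dist (x i) y ≤ 1 := by
    intro i y hy
    rcases Finset.mem_insert.mp hy with h | h
    · simp [h, G.dist_self]
    · rw [mem_neighborFinset] at h
      simpa using G.dist_le (Walk.cons h Walk.nil)
  have hNsub : ∀ i ∈ range m, N i ⊆ univ.filter (fun y => G.dist v y ≤ r) := by
    intro i hi y hy
    rw [mem_filter]
    refine ⟨mem_univ y, ?_⟩
    have h1 : G.dist v y ≤ G.dist v (x i) + G.dist (x i) y := hG.dist_triangle
    have h2 := hxle i
    have h3 := hdist1 i y hy
    have h4 : i ≤ m - 1 := by have := mem_range.mp hi; omega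
    omega
  have hdisj : ∀ i ∈ range m, ∀ j ∈ range m, i ≠ j → Disjoint (N i) (N j) := by
    intro i hi j hj hij
    rw [Finset.disjoint_left]
    intro y hyi hyj
    wlog hlt : i < j generalizing i j
    · exact this j hj i hi hij.symm hyj hyi (by omega)
    have h1 : G.dist (x i) (x j) ≤ G.dist (x i) y + G.dist y (x j) := hG.dist_triangle
    have h2 := hdist1 i y hyi
    have h3 := hdist1 j y hyj
    rw [G.dist_comm] at h3
    have h4 := hsep i j hlt (by have := mem_range.mp hj; omega)
    omega
  calc m * (G.minDegree + 1) = ∑ _i ∈ range m, (G.minDegree + 1) := by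
        rw [Finset.sum_const, card_range, smul_eq_mul]
    _ ≤ ∑ i ∈ range m, #(N i) := Finset.sum_le_sum (fun i _ => hNcard i)
    _ = #((range m).biUnion N) := (Finset.card_biUnion hdisj).symm
    _ ≤ #(univ.filter (fun y => G.dist v y ≤ r)) := by
        apply Finset.card_le_card
        intro y hy
        obtain ⟨i, hi, hyi⟩ := Finset.mem_biUnion.mp hy
        exact hNsub i hi hyi

end SimpleGraph

/-- The `r`-th power of a graph: two distinct vertices are adjacent whenever they are
within distance `r` of each other. -/
def SimpleGraph.power {V : Type*} (G : SimpleGraph V) (r : ℕ) : SimpleGraph V where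
  Adj u v := u ≠ v ∧ G.dist u v ≤ r
  symm := ⟨fun u v h => ⟨h.1.symm, by rw [SimpleGraph.dist_comm]; exact h.2⟩⟩
  loopless := ⟨fun v h => h.1 rfl⟩


/-- for a connected simple graph `G` with `r ≥ 6`, `r ≢ 0 (mod 3)` and
`diam(G) ≥ r`, we have `e(G^r) ≥ (1/2)·⌈r/3⌉·δ(G)·|G|`. -/
theorem edge_growth_simple_ne_zero_mod_three {V : Type*} [Fintype V]
    (G : SimpleGraph V) [DecidableRel G.Adj] (hG : G.Connected)
    (r : ℕ) (hr3 : r % 3 ≠ 0) (hr : 6 ≤ r)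
    (hdiam : ∃ u w : V, r ≤ G.dist u w) :
    (1 / 2 : ℝ) * (⌈(r : ℝ) / 3⌉ : ℝ) * G.minDegree * Nat.card V
      ≤ ((G.power r).edgeSet.ncard : ℝ) := by
  classical
  obtain ⟨u, w, huw⟩ := hdiam
  set k : ℕ := (r + 2) / 3 with hk
  have hk2 : 2 ≤ k := by omega
  have h3k : r ≤ 3 * k := by omega
  have h3k' : 3 * (k - 1) + 1 ≤ r := by omega
  set H := G.power r with hH
  set δ := G.minDegree with hδ
  -- per-vertex degree bound
  have hdeg : ∀ v : V, k * δ ≤ H.degree v := by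
    intro v
    have hballcard : k * δ + 1 ≤ (Finset.univ.filter (fun y => G.dist v y ≤ r)).card := by
      by_cases hfar : ∃ y, r < G.dist v y
      · obtain ⟨y, hy⟩ := hfar
        have := SimpleGraph.chain_card hG (v := v) (z := y) (m := k) (r := r)
          (by omega) (by omega) h3k'
        calc k * δ + 1 ≤ k * (δ + 1) := by nlinarith
          _ ≤ _ := this
      · push_neg at hfar
        have huniv : Finset.univ.filter (fun y => G.dist v y ≤ r) = Finset.univ := by
          apply Finset.filter_true_of_mem
          intro y _
          exact hfar y
        rw [huniv]
        have := SimpleGraph.chain_card hG (v := u) (z := w) (m := k) (r := r)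
          (by omega) (by omega) h3k'
        calc k * δ + 1 ≤ k * (δ + 1) := by nlinarith
          _ ≤ (Finset.univ.filter (fun y => G.dist u y ≤ r)).card := this
          _ ≤ (Finset.univ (α := V)).card := Finset.card_le_card (Finset.filter_subset _ _)
    -- degree v = card ball - 1
    have hnb : H.neighborFinset v =
        (Finset.univ.filter (fun y => G.dist v y ≤ r)).erase v := by
      ext y
      simp only [SimpleGraph.mem_neighborFinset, Finset.mem_erase, Finset.mem_filter,
        Finset.mem_univ, true_and]
      show (v ≠ y ∧ G.dist v y ≤ r) ↔ (y ≠ v ∧ G.dist v y ≤ r)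
      constructor
      · rintro ⟨h1, h2⟩; exact ⟨Ne.symm h1, h2⟩
      · rintro ⟨h1, h2⟩; exact ⟨Ne.symm h1, h2⟩
    have hvmem : v ∈ Finset.univ.filter (fun y => G.dist v y ≤ r) := by
      simp [G.dist_self]
    have : H.degree v = (Finset.univ.filter (fun y => G.dist v y ≤ r)).card - 1 := by
      rw [← SimpleGraph.card_neighborFinset_eq_degree, hnb,
        Finset.card_erase_of_mem hvmem]
    omega
  -- handshake
  have hsum : ∑ v : V, H.degree v = 2 * H.edgeFinset.card :=
    SimpleGraph.sum_degrees_eq_twice_card_edges H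
  have hmain : k * δ * Fintype.card V ≤ 2 * H.edgeFinset.card := by
    rw [← hsum]
    calc k * δ * Fintype.card V = ∑ _v : V, k * δ := by
          rw [Finset.sum_const, Finset.card_univ, smul_eq_mul, mul_comm]
      _ ≤ ∑ v : V, H.degree v := Finset.sum_le_sum (fun v _ => hdeg v)
  -- real glue
  have hE : H.edgeSet.ncard = H.edgeFinset.card := by
    rw [Set.ncard_eq_toFinset_card']
    rfl
  have hceil : (⌈(r : ℝ) / 3⌉ : ℝ) ≤ (k : ℝ) := by
    have : (⌈(r : ℝ) / 3⌉ : ℤ) ≤ (k : ℤ) := by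
      apply Int.ceil_le.mpr
      rw [div_le_iff₀ (by norm_num)]
      have : (r : ℝ) ≤ 3 * k := by exact_mod_cast h3k
      push_cast
      linarith
    exact_mod_cast this
  have hceilpos : (0 : ℝ) ≤ (⌈(r : ℝ) / 3⌉ : ℝ) := by
    have : (0 : ℤ) ≤ ⌈(r : ℝ) / 3⌉ := Int.ceil_nonneg (by positivity)
    exact_mod_cast this
  rw [Nat.card_eq_fintype_card, hE]
  have h2 : (k : ℝ) * δ * Fintype.card V ≤ 2 * H.edgeFinset.card := by
    exact_mod_cast hmain
  have hδ0 : (0 : ℝ) ≤ (δ : ℝ) := Nat.cast_nonneg _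
  have hn0 : (0 : ℝ) ≤ (Fintype.card V : ℝ) := Nat.cast_nonneg _
  nlinarith [mul_le_mul_of_nonneg_right (mul_le_mul_of_nonneg_right hceil hδ0) hn0]
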